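/- For every κ ∈ (0,1), with K(κ) = ∫₀¹ dt / √((1−t²)(1−κ²t²)) the complete elliptic integral of the first kind and E(κ) = ∫₀¹ √((1−κ²t²)/(1−t²)) dt the complete elliptic integral of the second kind, one has 0 < (1−κ²) K(κ) / ((2−κ²) E(κ)) < 1/2; equivalently, 0 < 2(1−κ²)K(κ) < (2−κ²)E(κ). -/

import Mathlib

open MeasureTheory Real intervalIntegral

/-- The complete elliptic integral of the first kind. -/
noncomputable def ellK (κ : ℝ) : ℝ :=
  ∫ t in (0:ℝ)..1, 1 / Real.sqrt ((1 - t ^ 2) * (1 - κ ^ 2 * t ^ 2))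

/-- The complete elliptic integral of the second kind. -/
noncomputable def ellE (κ : ℝ) : ℝ :=
  ∫ t in (0:ℝ)..1, Real.sqrt ((1 - κ ^ 2 * t ^ 2) / (1 - t ^ 2))


lemma dom_int : IntervalIntegrable (fun t : ℝ => (1 - t) ^ (-(1/2) : ℝ)) volume 0 1 := by
  have h := (intervalIntegral.intervalIntegrable_rpow'
    (a := 0) (b := 1) (r := (-(1/2) : ℝ)) (by norm_num)).comp_sub_left 1
  norm_num at h
  exact h.symm

lemma dom_eq {t : ℝ} (ht : t ≤ 1) : (1 - t) ^ (-(1/2) : ℝ) = 1 / Real.sqrt (1 - t) := by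
  rw [Real.rpow_neg (by linarith), ← Real.sqrt_eq_rpow, one_div]

lemma intK {κ : ℝ} (h1 : κ < 1) (h0 : 0 < κ) :
    IntervalIntegrable (fun t : ℝ => 1 / Real.sqrt ((1 - t ^ 2) * (1 - κ ^ 2 * t ^ 2)))
      volume 0 1 := by
  have hc : (0:ℝ) < Real.sqrt (1 - κ ^ 2) := Real.sqrt_pos.2 (by nlinarith)
  apply IntervalIntegrable.mono_fun' ((dom_int.const_mul (1 / Real.sqrt (1 - κ ^ 2))))
  · apply Measurable.aestronglyMeasurable
    exact measurable_const.div ((Real.continuous_sqrt.measurable).comp (by fun_prop))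
  · rw [Set.uIoc_of_le (by norm_num : (0:ℝ) ≤ 1)]
    refine (ae_restrict_iff' measurableSet_Ioc).2 (ae_of_all _ fun t ht => ?_)
    have h1t : 0 ≤ 1 - t := by linarith [ht.2]
    have key : Real.sqrt (1 - κ ^ 2) * Real.sqrt (1 - t)
        ≤ Real.sqrt ((1 - t ^ 2) * (1 - κ ^ 2 * t ^ 2)) := by
      rw [← Real.sqrt_mul (by nlinarith)]
      apply Real.sqrt_le_sqrt
      have hk2 : κ ^ 2 ≤ 1 := by nlinarith
      have ht2 : t ^ 2 ≤ 1 := by nlinarith [ht.1, ht.2]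
      have hA : (0:ℝ) ≤ 1 - κ ^ 2 * t ^ 2 := by
        nlinarith [mul_le_mul hk2 ht2 (sq_nonneg t) zero_le_one]
      have hB : (0:ℝ) ≤ 1 - t ^ 2 := by nlinarith [ht.1, ht.2]
      nlinarith [mul_nonneg (mul_nonneg h1t ht.1.le) hA,
        mul_nonneg (mul_nonneg h1t (sq_nonneg κ)) hB]
    have hn : (0:ℝ) ≤ 1 / Real.sqrt ((1 - t ^ 2) * (1 - κ ^ 2 * t ^ 2)) :=
      by positivity
    dsimp only
    rw [Real.norm_eq_abs, abs_of_nonneg hn, dom_eq ht.2]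
    rcases eq_or_lt_of_le ht.2 with h | h
    · subst h
      norm_num
    · have hst : 0 < Real.sqrt (1 - t) := Real.sqrt_pos.2 (by linarith)
      have hsp : 0 < Real.sqrt ((1 - t ^ 2) * (1 - κ ^ 2 * t ^ 2)) := by
        calc (0:ℝ) < Real.sqrt (1 - κ ^ 2) * Real.sqrt (1 - t) := by positivity
        _ ≤ _ := key
      rw [div_mul_div_comm, one_mul]
      exact one_div_le_one_div_of_le (by positivity) key

lemma intE {κ : ℝ} (h1 : κ < 1) (h0 : 0 < κ) :
    IntervalIntegrable (fun t : ℝ => Real.sqrt ((1 - κ ^ 2 * t ^ 2) / (1 - t ^ 2)))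
      volume 0 1 := by
  apply IntervalIntegrable.mono_fun' dom_int
  · exact (Real.continuous_sqrt.measurable.comp (by fun_prop)).aestronglyMeasurable
  · rw [Set.uIoc_of_le (by norm_num : (0:ℝ) ≤ 1)]
    refine (ae_restrict_iff' measurableSet_Ioc).2 (ae_of_all _ fun t ht => ?_)
    dsimp only
    rw [Real.norm_eq_abs, abs_of_nonneg (Real.sqrt_nonneg _), dom_eq ht.2]
    rcases eq_or_lt_of_le ht.2 with h | h
    · subst h; norm_num
    · have hb : (0:ℝ) < 1 - t ^ 2 := by nlinarith [ht.1]
      have hd : (0:ℝ) < 1 - t := by linarith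
      have hk2 : κ ^ 2 ≤ 1 := by nlinarith
      have ht2 : t ^ 2 ≤ 1 := by nlinarith [ht.1]
      have hA : 1 - κ ^ 2 * t ^ 2 ≤ 1 := by nlinarith [sq_nonneg (κ * t), mul_pow κ t 2]
      have hq : (1 - κ ^ 2 * t ^ 2) / (1 - t ^ 2) ≤ 1 / (1 - t) :=
        div_le_div₀ zero_le_one hA hd (by nlinarith [ht.1])
      calc Real.sqrt ((1 - κ ^ 2 * t ^ 2) / (1 - t ^ 2)) ≤ Real.sqrt (1 / (1 - t)) :=
            Real.sqrt_le_sqrt hq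
        _ = 1 / Real.sqrt (1 - t) := by
            rw [one_div, one_div, Real.sqrt_inv]

lemma deriv_g {κ : ℝ} (h1 : κ < 1) (h0 : 0 < κ) {x : ℝ} (hx : x ∈ Set.Ioo (0:ℝ) 1) :
    HasDerivAt (fun t : ℝ => t * Real.sqrt ((1 - t ^ 2) * (1 - κ ^ 2 * t ^ 2)))
      ((1 - (2 + 2 * κ ^ 2) * x ^ 2 + 3 * κ ^ 2 * x ^ 4)
        * (1 / Real.sqrt ((1 - x ^ 2) * (1 - κ ^ 2 * x ^ 2)))) x := by
  obtain ⟨hx0, hx1⟩ := hx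
  have hB : (0:ℝ) < 1 - x ^ 2 := by nlinarith
  have hA : (0:ℝ) < 1 - κ ^ 2 * x ^ 2 := by nlinarith [sq_nonneg (κ * x), mul_pow κ x 2, sq_nonneg x, sq_nonneg κ]
  have hu : (0:ℝ) < (1 - x ^ 2) * (1 - κ ^ 2 * x ^ 2) := mul_pos hB hA
  have hsu : (0:ℝ) < Real.sqrt ((1 - x ^ 2) * (1 - κ ^ 2 * x ^ 2)) := Real.sqrt_pos.2 hu
  have hdB : HasDerivAt (fun t : ℝ => 1 - t ^ 2) (-(2 * x)) x := by
    simpa using (hasDerivAt_pow 2 x).const_sub 1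
  have hdA : HasDerivAt (fun t : ℝ => 1 - κ ^ 2 * t ^ 2) (-(κ ^ 2 * (2 * x))) x := by
    simpa [mul_comm, mul_assoc] using ((hasDerivAt_pow 2 x).const_mul (κ ^ 2)).const_sub 1
  have hdu := hdB.mul hdA
  have hds := hdu.sqrt hu.ne'
  have := (hasDerivAt_id x).mul hds
  refine this.congr_deriv ?_
  symm
  simp only [Pi.mul_apply, id]
  have hsB : Real.sqrt (1 - x ^ 2) ^ 2 = 1 - x ^ 2 := Real.sq_sqrt hB.le
  have hsA : Real.sqrt (1 - κ ^ 2 * x ^ 2) ^ 2 = 1 - κ ^ 2 * x ^ 2 := Real.sq_sqrt hA.le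
  have hsB0 : 0 < Real.sqrt (1 - x ^ 2) := Real.sqrt_pos.2 hB
  have hsA0 : 0 < Real.sqrt (1 - κ ^ 2 * x ^ 2) := Real.sqrt_pos.2 hA
  rw [Real.sqrt_mul hB.le]
  field_simp
  linear_combination (-Real.sqrt (1 - κ ^ 2 * x ^ 2) ^ 2) * hsB
    + (-(1 - x ^ 2)) * hsA

lemma int_g' {κ : ℝ} (h1 : κ < 1) (h0 : 0 < κ) :
    IntervalIntegrable (fun t : ℝ => (1 - (2 + 2 * κ ^ 2) * t ^ 2 + 3 * κ ^ 2 * t ^ 4)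
      * (1 / Real.sqrt ((1 - t ^ 2) * (1 - κ ^ 2 * t ^ 2)))) volume 0 1 :=
  (intK h1 h0).continuousOn_mul (by fun_prop)

lemma integral_g' {κ : ℝ} (h1 : κ < 1) (h0 : 0 < κ) :
    (∫ t in (0:ℝ)..1, (1 - (2 + 2 * κ ^ 2) * t ^ 2 + 3 * κ ^ 2 * t ^ 4)
      * (1 / Real.sqrt ((1 - t ^ 2) * (1 - κ ^ 2 * t ^ 2)))) = 0 := by
  have hcont : Continuous (fun t : ℝ => t * Real.sqrt ((1 - t ^ 2) * (1 - κ ^ 2 * t ^ 2))) := by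
    fun_prop
  have h := intervalIntegral.integral_eq_sub_of_hasDerivAt_of_tendsto (f := fun t : ℝ =>
      t * Real.sqrt ((1 - t ^ 2) * (1 - κ ^ 2 * t ^ 2))) zero_lt_one
    (fun x hx => deriv_g h1 h0 hx) (int_g' h1 h0)
    (fa := 0) (fb := 0) ?_ ?_
  · rw [h]; ring
  · have := (hcont.tendsto 0).mono_left (nhdsWithin_le_nhds (s := Set.Ioi (0:ℝ)))
    simpa using this
  · have := (hcont.tendsto 1).mono_left (nhdsWithin_le_nhds (s := Set.Iio (1:ℝ)))
    simpa using this

lemma key_id {κ t : ℝ} (h1 : κ < 1) (h0 : 0 < κ) (ht : t ∈ Set.Ioo (0:ℝ) 1) :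
    (2 - κ ^ 2) * Real.sqrt ((1 - κ ^ 2 * t ^ 2) / (1 - t ^ 2))
      - 2 * (1 - κ ^ 2) * (1 / Real.sqrt ((1 - t ^ 2) * (1 - κ ^ 2 * t ^ 2)))
    = κ ^ 2 * ((1 - (2 + 2 * κ ^ 2) * t ^ 2 + 3 * κ ^ 2 * t ^ 4)
        * (1 / Real.sqrt ((1 - t ^ 2) * (1 - κ ^ 2 * t ^ 2)))
      + 3 * κ ^ 2 * (t ^ 2 * Real.sqrt (1 - t ^ 2) / Real.sqrt (1 - κ ^ 2 * t ^ 2))) := by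
  obtain ⟨ht0, ht1⟩ := ht
  have hB : (0:ℝ) < 1 - t ^ 2 := by nlinarith
  have hA : (0:ℝ) < 1 - κ ^ 2 * t ^ 2 := by nlinarith [sq_nonneg (κ * t), mul_pow κ t 2]
  have hsB : Real.sqrt (1 - t ^ 2) ^ 2 = 1 - t ^ 2 := Real.sq_sqrt hB.le
  have hsA : Real.sqrt (1 - κ ^ 2 * t ^ 2) ^ 2 = 1 - κ ^ 2 * t ^ 2 := Real.sq_sqrt hA.le
  have hsB0 : 0 < Real.sqrt (1 - t ^ 2) := Real.sqrt_pos.2 hB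
  have hsA0 : 0 < Real.sqrt (1 - κ ^ 2 * t ^ 2) := Real.sqrt_pos.2 hA
  rw [Real.sqrt_mul hB.le, Real.sqrt_div hA.le]
  field_simp
  linear_combination (2-κ^2) * hsA
    - (3*κ^4*t^2) * hsB

/-- For every modulus `κ ∈ (0,1)`,
`0 < (1−κ²)K(κ)/((2−κ²)E(κ)) < 1/2`; equivalently `0 < 2(1−κ²)K(κ) < (2−κ²)E(κ)`. -/
theorem elliptic_integral_ratio_bound (κ : ℝ) (hκ : κ ∈ Set.Ioo (0:ℝ) 1) :
    (0 < (1 - κ ^ 2) * ellK κ / ((2 - κ ^ 2) * ellE κ)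
      ∧ (1 - κ ^ 2) * ellK κ / ((2 - κ ^ 2) * ellE κ) < 1 / 2)
    ∧ (0 < 2 * (1 - κ ^ 2) * ellK κ ∧ 2 * (1 - κ ^ 2) * ellK κ < (2 - κ ^ 2) * ellE κ) := by
  obtain ⟨h0, h1⟩ := hκ
  have h1k : (0:ℝ) < 1 - κ ^ 2 := by nlinarith
  have h2k : (0:ℝ) < 2 - κ ^ 2 := by nlinarith
  have hApos : ∀ x : ℝ, x ∈ Set.Icc (0:ℝ) 1 → (0:ℝ) < 1 - κ ^ 2 * x ^ 2 := by
    intro x hx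
    nlinarith [mul_nonneg (sq_nonneg κ) (by nlinarith [hx.1, hx.2] : (0:ℝ) ≤ 1 - x ^ 2)]
  have hqc : ContinuousOn
      (fun t : ℝ => t ^ 2 * Real.sqrt (1 - t ^ 2) / Real.sqrt (1 - κ ^ 2 * t ^ 2))
      (Set.uIcc (0:ℝ) 1) := by
    apply ContinuousOn.div (by fun_prop) (by fun_prop)
    intro x hx
    rw [Set.uIcc_of_le (by norm_num : (0:ℝ) ≤ 1)] at hx
    exact (Real.sqrt_pos.2 (hApos x hx)).ne'
  have hqi : IntervalIntegrable _ volume 0 1 := hqc.intervalIntegrable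
  have hqpos : 0 < ∫ t in (0:ℝ)..1, t ^ 2 * Real.sqrt (1 - t ^ 2) / Real.sqrt (1 - κ ^ 2 * t ^ 2) := by
    refine intervalIntegral_pos_of_pos_on hqi (fun x hx => ?_) zero_lt_one
    have hB : (0:ℝ) < 1 - x ^ 2 := by nlinarith [hx.1, hx.2]
    have hA := hApos x ⟨hx.1.le, hx.2.le⟩
    exact div_pos (mul_pos (pow_pos hx.1 2) (Real.sqrt_pos.2 hB)) (Real.sqrt_pos.2 hA)
  have hK : 0 < ellK κ := by
    refine intervalIntegral_pos_of_pos_on (intK h1 h0) (fun x hx => ?_) zero_lt_one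
    have hB : (0:ℝ) < 1 - x ^ 2 := by nlinarith [hx.1, hx.2]
    exact one_div_pos.2 (Real.sqrt_pos.2 (mul_pos hB (hApos x ⟨hx.1.le, hx.2.le⟩)))
  have hE : 0 < ellE κ := by
    refine intervalIntegral_pos_of_pos_on (intE h1 h0) (fun x hx => ?_) zero_lt_one
    have hB : (0:ℝ) < 1 - x ^ 2 := by nlinarith [hx.1, hx.2]
    exact Real.sqrt_pos.2 (div_pos (hApos x ⟨hx.1.le, hx.2.le⟩) hB)
  have hne : ∀ᵐ t : ℝ, t ≠ (1:ℝ) := by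
    rw [ae_iff]
    have hs : {x : ℝ | ¬ x ≠ 1} = {1} := by ext x; simp
    rw [hs]
    exact measure_singleton 1
  have hcongr : (∫ t in (0:ℝ)..1, ((2 - κ ^ 2) * Real.sqrt ((1 - κ ^ 2 * t ^ 2) / (1 - t ^ 2))
        - 2 * (1 - κ ^ 2) * (1 / Real.sqrt ((1 - t ^ 2) * (1 - κ ^ 2 * t ^ 2)))))
      = ∫ t in (0:ℝ)..1, κ ^ 2 * ((1 - (2 + 2 * κ ^ 2) * t ^ 2 + 3 * κ ^ 2 * t ^ 4)
          * (1 / Real.sqrt ((1 - t ^ 2) * (1 - κ ^ 2 * t ^ 2)))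
        + 3 * κ ^ 2 * (t ^ 2 * Real.sqrt (1 - t ^ 2) / Real.sqrt (1 - κ ^ 2 * t ^ 2))) := by
    apply intervalIntegral.integral_congr_ae
    filter_upwards [hne] with t htne htmem
    rw [Set.uIoc_of_le (by norm_num : (0:ℝ) ≤ 1)] at htmem
    exact key_id h1 h0 ⟨htmem.1, lt_of_le_of_ne htmem.2 htne⟩
  have hL : (∫ t in (0:ℝ)..1, ((2 - κ ^ 2) * Real.sqrt ((1 - κ ^ 2 * t ^ 2) / (1 - t ^ 2))
        - 2 * (1 - κ ^ 2) * (1 / Real.sqrt ((1 - t ^ 2) * (1 - κ ^ 2 * t ^ 2)))))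
      = (2 - κ ^ 2) * ellE κ - 2 * (1 - κ ^ 2) * ellK κ := by
    rw [intervalIntegral.integral_sub ((intE h1 h0).const_mul _) ((intK h1 h0).const_mul _),
      intervalIntegral.integral_const_mul, intervalIntegral.integral_const_mul]
    rfl
  have hR : (∫ t in (0:ℝ)..1, κ ^ 2 * ((1 - (2 + 2 * κ ^ 2) * t ^ 2 + 3 * κ ^ 2 * t ^ 4)
          * (1 / Real.sqrt ((1 - t ^ 2) * (1 - κ ^ 2 * t ^ 2)))
        + 3 * κ ^ 2 * (t ^ 2 * Real.sqrt (1 - t ^ 2) / Real.sqrt (1 - κ ^ 2 * t ^ 2))))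
      = κ ^ 2 * (3 * κ ^ 2 *
          ∫ t in (0:ℝ)..1, t ^ 2 * Real.sqrt (1 - t ^ 2) / Real.sqrt (1 - κ ^ 2 * t ^ 2)) := by
    rw [intervalIntegral.integral_const_mul,
      intervalIntegral.integral_add (int_g' h1 h0) (hqi.const_mul _),
      integral_g' h1 h0, intervalIntegral.integral_const_mul, zero_add]
  have hdiff : 2 * (1 - κ ^ 2) * ellK κ < (2 - κ ^ 2) * ellE κ := by
    have heq : (2 - κ ^ 2) * ellE κ - 2 * (1 - κ ^ 2) * ellK κ
        = κ ^ 2 * (3 * κ ^ 2 *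
          ∫ t in (0:ℝ)..1, t ^ 2 * Real.sqrt (1 - t ^ 2) / Real.sqrt (1 - κ ^ 2 * t ^ 2)) := by
      rw [← hL, hcongr, hR]
    nlinarith [mul_pos (mul_pos (pow_pos h0 2) (by positivity : (0:ℝ) < 3 * κ ^ 2)) hqpos]
  refine ⟨⟨div_pos (mul_pos h1k hK) (mul_pos h2k hE), ?_⟩,
    ⟨by nlinarith [mul_pos h1k hK], by linarith⟩⟩
  rw [div_lt_div_iff₀ (mul_pos h2k hE) two_pos]
  linarith
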